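/- Let m₁, m₂, m₃, n₁, n₂, n₃ be integers, set D₁ = m₂n₃ − m₃n₂, D₂ = m₃n₁ − m₁n₃, D₃ = m₁n₂ − m₂n₁, K = n₁n₂m₃ + n₂n₃m₁ + n₃n₁m₂ − m₁m₂n₃ − m₂m₃n₁ − m₃m₁n₂, and K_j = m₁m₂n₃ − m₁n₂m₃ + n₁m₂n₃ − n₁n₂m₃ + n₁m₂m₃ − m₁n₂n₃. Let G₁, G₂, G₃ : ℝ → ℂ be continuously differentiable and nonvanishing on [0,1], set uₖ = ∫_0^1 Gₖ'(t)/Gₖ(t) dt, and set Log = (2πi)²·(πi·K_j + D₁u₁ + D₂u₂ + D₃u₃). Then exp((2πi)^{−2}·Log) · G₁(0)^{D₁} · G₂(0)^{D₂} · G₃(0)^{D₃} = (−1)^K · G₁(1)^{D₁} · G₂(1)^{D₂} · G₃(1)^{D₃}, where the powers are integer powers of nonzero complex numbers. -/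

import Mathlib

open Complex Set

lemma parshin_key (G G' : ℝ → ℂ)
    (hd : ∀ t ∈ Set.Icc (0:ℝ) 1, HasDerivAt G (G' t) t)
    (hc : ContinuousOn G' (Set.Icc 0 1))
    (h0 : ∀ t ∈ Set.Icc (0:ℝ) 1, G t ≠ 0) :
    Complex.exp (∫ t in (0:ℝ)..1, G' t / G t) * G 0 = G 1 := by
  set φ : ℝ → ℂ := Set.IccExtend zero_le_one
      ((Set.Icc (0:ℝ) 1).restrict (fun t => G' t / G t)) with hφdef
  have hGc : ContinuousOn G (Set.Icc (0:ℝ) 1) := fun t ht =>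
    (hd t ht).continuousAt.continuousWithinAt
  have hcq : ContinuousOn (fun t => G' t / G t) (Set.Icc (0:ℝ) 1) :=
    hc.div hGc h0
  have hφcont : Continuous φ :=
    Continuous.Icc_extend' (continuousOn_iff_continuous_restrict.mp hcq)
  have hφeq : ∀ t ∈ Set.Icc (0:ℝ) 1, φ t = G' t / G t := fun t ht => by
    rw [hφdef, Set.IccExtend_of_mem _ _ ht]; rfl
  set F : ℝ → ℂ := fun u => ∫ s in (0:ℝ)..u, φ s with hFdef
  have hFd : ∀ t : ℝ, HasDerivAt F (φ t) t := fun t =>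
    (hφcont.integral_hasStrictDerivAt 0 t).hasDerivAt
  set H : ℝ → ℂ := fun t => Complex.exp (-F t) * G t with hHdef
  have hHd : ∀ t ∈ Set.Icc (0:ℝ) 1, HasDerivAt H 0 t := by
    intro t ht
    have h1 : HasDerivAt (fun u => Complex.exp (-F u)) (Complex.exp (-F t) * -φ t) t :=
      (((hFd t).neg).cexp)
    have h2 := h1.mul (hd t ht)
    have : Complex.exp (-F t) * -φ t * G t + Complex.exp (-F t) * G' t = 0 := by
      rw [hφeq t ht]
      field_simp [h0 t ht]
      ring
    rwa [this] at h2
  have hHcont : ContinuousOn H (Set.Icc (0:ℝ) 1) := fun t ht =>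
    (hHd t ht).continuousAt.continuousWithinAt
  have hconst := constant_of_has_deriv_right_zero hHcont
    (fun x hx => (hHd x (Set.mem_Icc_of_Ico hx)).hasDerivWithinAt)
  have h01 := hconst 1 (by norm_num)
  have hF0 : F 0 = 0 := by simp [hFdef]
  have hF1 : F 1 = ∫ t in (0:ℝ)..1, G' t / G t := by
    rw [hFdef]
    exact intervalIntegral.integral_congr (fun t ht => hφeq t (by
      rwa [Set.uIcc_of_le zero_le_one] at ht))
  have : Complex.exp (-F 1) * G 1 = G 0 := by
    simpa [hHdef, hF0] using h01
  have hx := congrArg (fun z => Complex.exp (F 1) * z) this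
  rw [← mul_assoc, ← Complex.exp_add, add_neg_cancel, Complex.exp_zero, one_mul] at hx
  rw [← hF1, ← hx]

/-- Theorem 0.9 / Corollary 4.5: the Parshin symbol equals
`exp((2πi)⁻² · Log{f₁,f₂,f₃})` times `g₁(Q)^{D₁} g₂(Q)^{D₂} g₃(Q)^{D₃}`, where
`Gₖ(t) = gₖ(γ(t))` is the restriction of the unit part `gₖ` along the path `γ`
from the base point `Q = γ(0)` to the point `γ(1)` near `P`. -/
theorem parshin_eq_exp_log
    (m₁ m₂ m₃ n₁ n₂ n₃ : ℤ) (G₁ G₂ G₃ G₁' G₂' G₃' : ℝ → ℂ)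
    (hG₁d : ∀ t ∈ Set.Icc (0:ℝ) 1, HasDerivAt G₁ (G₁' t) t)
    (hG₂d : ∀ t ∈ Set.Icc (0:ℝ) 1, HasDerivAt G₂ (G₂' t) t)
    (hG₃d : ∀ t ∈ Set.Icc (0:ℝ) 1, HasDerivAt G₃ (G₃' t) t)
    (hG₁c : ContinuousOn G₁' (Set.Icc 0 1))
    (hG₂c : ContinuousOn G₂' (Set.Icc 0 1))
    (hG₃c : ContinuousOn G₃' (Set.Icc 0 1))
    (hG₁0 : ∀ t ∈ Set.Icc (0:ℝ) 1, G₁ t ≠ 0)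
    (hG₂0 : ∀ t ∈ Set.Icc (0:ℝ) 1, G₂ t ≠ 0)
    (hG₃0 : ∀ t ∈ Set.Icc (0:ℝ) 1, G₃ t ≠ 0) :
    Complex.exp ((2 * Real.pi * Complex.I) ^ (-2 : ℤ) *
        ((2 * Real.pi * Complex.I) ^ (2 : ℕ) *
          ((Real.pi : ℂ) * Complex.I *
              ((m₁*m₂*n₃ - m₁*n₂*m₃ + n₁*m₂*n₃ - n₁*n₂*m₃ + n₁*m₂*m₃ - m₁*n₂*n₃ : ℤ) : ℂ)
            + ((m₂*n₃ - m₃*n₂ : ℤ) : ℂ) * (∫ t in (0:ℝ)..1, G₁' t / G₁ t)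
            + ((m₃*n₁ - m₁*n₃ : ℤ) : ℂ) * (∫ t in (0:ℝ)..1, G₂' t / G₂ t)
            + ((m₁*n₂ - m₂*n₁ : ℤ) : ℂ) * (∫ t in (0:ℝ)..1, G₃' t / G₃ t))))
      * G₁ 0 ^ (m₂*n₃ - m₃*n₂) * G₂ 0 ^ (m₃*n₁ - m₁*n₃) * G₃ 0 ^ (m₁*n₂ - m₂*n₁)
    = (-1 : ℂ) ^ (n₁*n₂*m₃ + n₂*n₃*m₁ + n₃*n₁*m₂ - m₁*m₂*n₃ - m₂*m₃*n₁ - m₃*m₁*n₂)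
      * G₁ 1 ^ (m₂*n₃ - m₃*n₂) * G₂ 1 ^ (m₃*n₁ - m₁*n₃) * G₃ 1 ^ (m₁*n₂ - m₂*n₁) := by
  have h2pi : (2 * (Real.pi : ℂ) * Complex.I) ≠ 0 := by
    simp [Real.pi_ne_zero, Complex.I_ne_zero]
  set Kj : ℤ := m₁*m₂*n₃ - m₁*n₂*m₃ + n₁*m₂*n₃ - n₁*n₂*m₃ + n₁*m₂*m₃ - m₁*n₂*n₃ with hKj
  set K : ℤ := n₁*n₂*m₃ + n₂*n₃*m₁ + n₃*n₁*m₂ - m₁*m₂*n₃ - m₂*m₃*n₁ - m₃*m₁*n₂ with hK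
  set D₁ : ℤ := m₂*n₃ - m₃*n₂
  set D₂ : ℤ := m₃*n₁ - m₁*n₃
  set D₃ : ℤ := m₁*n₂ - m₂*n₁
  set u₁ : ℂ := ∫ t in (0:ℝ)..1, G₁' t / G₁ t
  set u₂ : ℂ := ∫ t in (0:ℝ)..1, G₂' t / G₂ t
  set u₃ : ℂ := ∫ t in (0:ℝ)..1, G₃' t / G₃ t
  have hpow : ∀ X : ℂ, (2 * (Real.pi : ℂ) * Complex.I) ^ (-2 : ℤ) *
      ((2 * (Real.pi : ℂ) * Complex.I) ^ (2 : ℕ) * X) = X := by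
    intro X
    rw [← mul_assoc, ← zpow_natCast, ← zpow_add₀ h2pi]
    norm_num
  rw [hpow]
  have k1 := parshin_key G₁ G₁' hG₁d hG₁c hG₁0
  have k2 := parshin_key G₂ G₂' hG₂d hG₂c hG₂0
  have k3 := parshin_key G₃ G₃' hG₃d hG₃c hG₃0
  have e1 : Complex.exp ((D₁ : ℂ) * u₁) * G₁ 0 ^ D₁ = G₁ 1 ^ D₁ := by
    rw [Complex.exp_int_mul, ← mul_zpow, k1]
  have e2 : Complex.exp ((D₂ : ℂ) * u₂) * G₂ 0 ^ D₂ = G₂ 1 ^ D₂ := by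
    rw [Complex.exp_int_mul, ← mul_zpow, k2]
  have e3 : Complex.exp ((D₃ : ℂ) * u₃) * G₃ 0 ^ D₃ = G₃ 1 ^ D₃ := by
    rw [Complex.exp_int_mul, ← mul_zpow, k3]
  have hsign : ((-1 : ℂ) ^ Kj) = (-1 : ℂ) ^ K := by
    have heven : Even (Kj + K) := ⟨n₁*m₂*n₃ - m₁*n₂*m₃, by rw [hKj, hK]; ring⟩
    have h1 : (-1 : ℂ) ^ Kj * (-1 : ℂ) ^ K = 1 := by
      rw [← zpow_add₀ (by norm_num : (-1 : ℂ) ≠ 0)]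
      exact heven.neg_one_zpow
    have h2 : (-1 : ℂ) ^ K * (-1 : ℂ) ^ K = 1 := by
      rw [← zpow_add₀ (by norm_num : (-1 : ℂ) ≠ 0)]
      exact Even.neg_one_zpow ⟨K, rfl⟩
    rw [eq_inv_of_mul_eq_one_left h1]
    exact (eq_inv_of_mul_eq_one_left h2).symm
  have e0 : Complex.exp ((Real.pi : ℂ) * Complex.I * (Kj : ℂ)) = (-1 : ℂ) ^ K := by
    rw [mul_comm, Complex.exp_int_mul, Complex.exp_pi_mul_I, hsign]
  calc Complex.exp ((Real.pi : ℂ) * Complex.I * (Kj : ℂ) + (D₁ : ℂ) * u₁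
          + (D₂ : ℂ) * u₂ + (D₃ : ℂ) * u₃)
        * G₁ 0 ^ D₁ * G₂ 0 ^ D₂ * G₃ 0 ^ D₃
      = Complex.exp ((Real.pi : ℂ) * Complex.I * (Kj : ℂ))
        * (Complex.exp ((D₁ : ℂ) * u₁) * G₁ 0 ^ D₁)
        * (Complex.exp ((D₂ : ℂ) * u₂) * G₂ 0 ^ D₂)
        * (Complex.exp ((D₃ : ℂ) * u₃) * G₃ 0 ^ D₃) := by
        rw [Complex.exp_add, Complex.exp_add, Complex.exp_add]; ring
    _ = (-1 : ℂ) ^ K * G₁ 1 ^ D₁ * G₂ 1 ^ D₂ * G₃ 1 ^ D₃ := by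
        rw [e0, e1, e2, e3]
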